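/- For every u ∈ V one has ‖P_M u‖_M ≤ ‖P̃ u‖_M and ⟨u, P̃ u⟩_M ≤ ‖u‖²_M. -/

import Mathlib

open scoped RealInnerProductSpace

noncomputable section

/-- Loewner order: `X ≼ Y` iff `Y - X` is positive semidefinite. -/
def LoewnerLE {E : Type*} [NormedAddCommGroup E] [InnerProductSpace ℝ E]
    (X Y : E →ₗ[ℝ] E) : Prop :=
  ∀ u : E, ⟪u, X u⟫ ≤ ⟪u, Y u⟫

/-- The `A`-norm `‖u‖_A = ⟪u, A u⟫ ^ (1/2)`. -/
def anorm {E : Type*} [NormedAddCommGroup E] [InnerProductSpace ℝ E]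
    (A : E →ₗ[ℝ] E) (u : E) : ℝ :=
  Real.sqrt ⟪u, A u⟫

theorem stmt1 {V W : Type*}
    [NormedAddCommGroup V] [InnerProductSpace ℝ V] [FiniteDimensional ℝ V]
    [NormedAddCommGroup W] [InnerProductSpace ℝ W] [FiniteDimensional ℝ W]
    (M Minv : V →ₗ[ℝ] V) (hMsym : M.IsSymmetric)
    (hMpos : ∀ u : V, u ≠ 0 → 0 < ⟪u, M u⟫)
    (hMinv : Minv ∘ₗ M = LinearMap.id) (hMinv' : M ∘ₗ Minv = LinearMap.id)
    (B : V →ₗ[ℝ] W) (hB : Function.Surjective B)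
    (S Sinv : W →ₗ[ℝ] W) (hS : S = B ∘ₗ Minv ∘ₗ LinearMap.adjoint B)
    (hSinv : Sinv ∘ₗ S = LinearMap.id) (hSinv' : S ∘ₗ Sinv = LinearMap.id)
    (St Stinv : W →ₗ[ℝ] W) (hStsym : St.IsSymmetric)
    (hStpos : ∀ w : W, w ≠ 0 → 0 < ⟪w, St w⟫)
    (hStinv : Stinv ∘ₗ St = LinearMap.id) (hStinv' : St ∘ₗ Stinv = LinearMap.id)
    (PM Pt : V →ₗ[ℝ] V)
    (hPM : PM = LinearMap.id - Minv ∘ₗ LinearMap.adjoint B ∘ₗ Sinv ∘ₗ B)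
    (hPt : Pt = LinearMap.id - Minv ∘ₗ LinearMap.adjoint B ∘ₗ Stinv ∘ₗ B)
    (u : V) :
    anorm M (PM u) ≤ anorm M (Pt u) ∧ ⟪u, M (Pt u)⟫ ≤ ⟪u, M u⟫ := by

  have hMap : ∀ x : V, M (Minv x) = x := fun x => by
    simpa using LinearMap.congr_fun hMinv' x
  have hSap : ∀ w : W, Sinv (S w) = w := fun w => by
    simpa using LinearMap.congr_fun hSinv w
  have hSap' : ∀ w : W, S (Sinv w) = w := fun w => by
    simpa using LinearMap.congr_fun hSinv' w
  have hStap' : ∀ w : W, St (Stinv w) = w := fun w => by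
    simpa using LinearMap.congr_fun hStinv' w
  have hMnn : ∀ x : V, 0 ≤ ⟪x, M x⟫ := by
    intro x
    rcases eq_or_ne x 0 with h | h
    · simp [h]
    · exact (hMpos x h).le
  have hStnn : ∀ w : W, 0 ≤ ⟪w, St w⟫ := by
    intro w
    rcases eq_or_ne w 0 with h | h
    · simp [h]
    · exact (hStpos w h).le
  have hStinvnn : ∀ w : W, 0 ≤ ⟪w, Stinv w⟫ := by
    intro w
    have h1 : ⟪w, Stinv w⟫ = ⟪St (Stinv w), Stinv w⟫ := by rw [hStap' w]
    rw [h1, hStsym (Stinv w) (Stinv w)]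
    exact hStnn _
  -- B vanishes on range of PM
  have hBP : ∀ x : V, B (PM x) = 0 := by
    intro x
    rw [hPM]
    simp only [LinearMap.sub_apply, LinearMap.comp_apply, LinearMap.id_apply, map_sub]
    have h1 : B (Minv ((LinearMap.adjoint B) (Sinv (B x)))) = S (Sinv (B x)) := by
      rw [hS]; rfl
    rw [h1, hSap' (B x), sub_self]
  -- PM kills Minv ∘ adjoint B
  have hPMker : ∀ y : W, PM (Minv ((LinearMap.adjoint B) y)) = 0 := by
    intro y
    rw [hPM]
    simp only [LinearMap.sub_apply, LinearMap.comp_apply, LinearMap.id_apply]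
    have h1 : B (Minv ((LinearMap.adjoint B) y)) = S y := by rw [hS]; rfl
    rw [h1, hSap y, sub_self]
  have hPMPt : PM (Pt u) = PM u := by
    conv_lhs => rw [hPt]
    simp only [LinearMap.sub_apply, LinearMap.comp_apply, LinearMap.id_apply, map_sub]
    rw [hPMker, sub_zero]
  set v := Pt u with hv
  set q : V := Minv ((LinearMap.adjoint B) (Sinv (B v))) with hq
  have hpv : PM v = v - q := by
    rw [hPM]
    simp only [LinearMap.sub_apply, LinearMap.comp_apply, LinearMap.id_apply]
    rfl
  have hMq : M q = (LinearMap.adjoint B) (Sinv (B v)) := hMap _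
  have hcross : ⟪PM v, M q⟫ = 0 := by
    rw [hMq, LinearMap.adjoint_inner_right, hBP, inner_zero_left]
  have hcross2 : ⟪q, M (PM v)⟫ = 0 := by
    rw [← hMsym q (PM v), hMq, LinearMap.adjoint_inner_left, hBP, inner_zero_right]
  have key : ⟪PM v, M (PM v)⟫ ≤ ⟪v, M v⟫ := by
    have hvsum : v = PM v + q := by rw [hpv]; abel
    have hexp : ⟪v, M v⟫ = ⟪PM v, M (PM v)⟫ + ⟪q, M q⟫ := by
      conv_lhs => rw [hvsum]
      rw [map_add, inner_add_left, inner_add_right, inner_add_right, hcross, hcross2]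
      ring
    rw [hexp]
    exact le_add_of_nonneg_right (hMnn q)
  constructor
  · unfold anorm
    rw [← hPMPt]
    exact Real.sqrt_le_sqrt key
  · have h1 : ⟪u, M (Pt u)⟫ = ⟪u, M u⟫ - ⟪B u, Stinv (B u)⟫ := by
      rw [hPt]
      simp only [LinearMap.sub_apply, LinearMap.comp_apply, LinearMap.id_apply, map_sub,
        inner_sub_right]
      congr 1
      rw [hMap, LinearMap.adjoint_inner_right]
    rw [h1]
    have := hStinvnn (B u)
    linarith
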